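/- Let n ≥ 3, ℓ ≥ 1, write z = (z₁, z₂, z₃, z̃) ∈ ℂ³ × ℂ^{n−3}, and let σ₁(z) = Re(z₁z₂ + z₁·conj(z₃)). Let h be a real-valued C^ℓ function on an open neighbourhood W of 0 in ℂ^n with h(0) = 0, set γ = 1 + h, and on { z ∈ W : γ(z) > 0 } define σ(z) = Re(z₁z₂ + z₁·conj(z₃)) + |z₁|² h(z) and Ψ(z) = ( √(γ(z)) z₁, z₂/√(γ(z)), ((γ(z) − 1)/√(γ(z))) z₁ + z₃/√(γ(z)), z̃ ). Then: (a) σ₁(Ψ(z)) = σ(z) for every such z, so Ψ maps { σ = 0 } into N₁ = { σ₁ = 0 } and maps { z₁ = 0 } into { z₁ = 0 }; (b) Ψ is C^ℓ on a neighbourhood of 0 and its (real) Fréchet derivative at 0 is the identity; consequently Ψ restricts to a C^ℓ diffeomorphism between open neighbourhoods of 0 in ℂ^n. -/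

import Mathlib

open Complex

noncomputable section

/-- `σ₁(z) = Re(z₁ z₂ + z₁ conj(z₃))` on `ℂ^n` (with `n = m + 3 ≥ 3`). -/
def sigma1 (m : ℕ) (z : EuclideanSpace ℂ (Fin (m + 3))) : ℝ :=
  (z 0 * z 1 + z 0 * (starRingEnd ℂ) (z 2)).re

/-- The explicit map `Ψ` straightening the perturbed cone
`N = {σ = 0}` onto the model cone `N₁ = {σ₁ = 0}`: it satisfies `σ₁ ∘ Ψ = σ` where
`γ > 0`, preserves `{z₁ = 0}`, is `C^ℓ` near `0` with derivative the identity at `0`,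
and hence restricts to a `C^ℓ` diffeomorphism between neighbourhoods of `0`. -/
theorem straightening_map_Psi (m ℓ : ℕ) (hℓ : 1 ≤ ℓ)
    (W : Set (EuclideanSpace ℂ (Fin (m + 3))))
    (hWo : IsOpen W) (hW0 : (0 : EuclideanSpace ℂ (Fin (m + 3))) ∈ W)
    (h : EuclideanSpace ℂ (Fin (m + 3)) → ℝ)
    (hsm : ContDiffOn ℝ ℓ h W) (hh0 : h 0 = 0) :
    let γ : EuclideanSpace ℂ (Fin (m + 3)) → ℝ := fun z => 1 + h z
    let σ : EuclideanSpace ℂ (Fin (m + 3)) → ℝ := fun z => sigma1 m z + ‖z 0‖ ^ 2 * h z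
    let Ψ : EuclideanSpace ℂ (Fin (m + 3)) → EuclideanSpace ℂ (Fin (m + 3)) := fun z =>
      WithLp.toLp 2 (fun i => if i = 0 then (Real.sqrt (γ z) : ℂ) * z 0
        else if i = 1 then z 1 / (Real.sqrt (γ z) : ℂ)
        else if i = 2 then
          (((γ z - 1) / Real.sqrt (γ z) : ℝ) : ℂ) * z 0 + z 2 / (Real.sqrt (γ z) : ℂ)
        else z i)
    -- (a)
    (∀ z ∈ W, 0 < γ z → sigma1 m (Ψ z) = σ z) ∧
    (∀ z ∈ W, 0 < γ z → z 0 = 0 → (Ψ z) 0 = 0) ∧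
    -- (b)
    (∃ W' : Set (EuclideanSpace ℂ (Fin (m + 3))),
      IsOpen W' ∧ 0 ∈ W' ∧ W' ⊆ W ∧ ContDiffOn ℝ ℓ Ψ W' ∧
      HasFDerivAt Ψ (ContinuousLinearMap.id ℝ (EuclideanSpace ℂ (Fin (m + 3)))) 0 ∧
      ∃ (V₁ V₂ : Set (EuclideanSpace ℂ (Fin (m + 3))))
        (g : EuclideanSpace ℂ (Fin (m + 3)) → EuclideanSpace ℂ (Fin (m + 3))),
        IsOpen V₁ ∧ IsOpen V₂ ∧ 0 ∈ V₁ ∧ 0 ∈ V₂ ∧ V₁ ⊆ W' ∧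
        Set.BijOn Ψ V₁ V₂ ∧ (∀ z ∈ V₁, g (Ψ z) = z) ∧ ContDiffOn ℝ ℓ g V₂) := by
  intro γ σ Ψ
  have h10 : (1 : Fin (m + 3)) ≠ 0 := by
    simp [Fin.ext_iff]
  have h20 : (2 : Fin (m + 3)) ≠ 0 := by
    simp [Fin.ext_iff, Nat.mod_eq_of_lt (show 2 < m + 3 by omega)]
  have h21 : (2 : Fin (m + 3)) ≠ 1 := by
    simp [Fin.ext_iff, Nat.mod_eq_of_lt (show 2 < m + 3 by omega)]
  have hΨ0 : ∀ z, Ψ z 0 = (Real.sqrt (γ z) : ℂ) * z 0 := by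
    intro z; simp only [Ψ]; simp [h10, h20, h21]
  have hΨ1 : ∀ z, Ψ z 1 = z 1 / (Real.sqrt (γ z) : ℂ) := by
    intro z; simp only [Ψ]; simp [h10, h20, h21]
  have hΨ2 : ∀ z, Ψ z 2 =
      (((γ z - 1) / Real.sqrt (γ z) : ℝ) : ℂ) * z 0 + z 2 / (Real.sqrt (γ z) : ℂ) := by
    intro z; simp only [Ψ]; simp [h10, h20, h21]
  have hΨi : ∀ z (i : Fin (m + 3)), i ≠ 0 → i ≠ 1 → i ≠ 2 → Ψ z i = z i := by
    intro z i hi0 hi1 hi2; simp only [Ψ]; simp [hi0, hi1, hi2]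
  have hγ0 : γ 0 = 1 := by simp [γ, hh0]
  refine ⟨?_, ?_, ?_⟩
  · -- part (a): σ₁ ∘ Ψ = σ
    intro z hz hpos
    have hspos : (0 : ℝ) < Real.sqrt (γ z) := Real.sqrt_pos.2 hpos
    have hsne : ((Real.sqrt (γ z) : ℝ) : ℂ) ≠ 0 := by
      exact_mod_cast ne_of_gt hspos
    have key : (((Real.sqrt (γ z) : ℝ) : ℂ) * z 0) * (z 1 / (Real.sqrt (γ z) : ℂ))
        + (((Real.sqrt (γ z) : ℝ) : ℂ) * z 0) *
          (starRingEnd ℂ) ((((γ z - 1) / Real.sqrt (γ z) : ℝ) : ℂ) * z 0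
            + z 2 / (Real.sqrt (γ z) : ℂ))
        = z 0 * z 1 + z 0 * (starRingEnd ℂ) (z 2)
          + (((γ z - 1 : ℝ)) : ℂ) * (z 0 * (starRingEnd ℂ) (z 0)) := by
      simp only [map_add, map_mul, map_div₀, Complex.conj_ofReal]
      push_cast
      field_simp
      ring
    unfold sigma1
    rw [hΨ0, hΨ1, hΨ2, key]
    rw [Complex.mul_conj]
    rw [show (((γ z - 1 : ℝ)) : ℂ) * ((Complex.normSq (z 0) : ℝ) : ℂ)
        = (((γ z - 1) * Complex.normSq (z 0) : ℝ) : ℂ) by push_cast; ring]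
    rw [Complex.add_re, Complex.ofReal_re]
    have hns : Complex.normSq (z 0) = ‖z 0‖ ^ 2 := by
      rw [Complex.normSq_eq_norm_sq]
    have hγh : γ z - 1 = h z := by simp [γ]
    simp only [σ, sigma1, hns, hγh]
    ring
  · -- part (a'): Ψ preserves {z₁ = 0}
    intro z _ _ hz0
    rw [hΨ0, hz0, mul_zero]
  · -- part (b)
    have hℓ' : (ℓ : WithTop ℕ∞) ≠ 0 := by exact_mod_cast (show ℓ ≠ 0 by omega)
    have hγcont : ContinuousOn γ W := continuousOn_const.add hsm.continuousOn
    set W' : Set (EuclideanSpace ℂ (Fin (m + 3))) := W ∩ γ ⁻¹' Set.Ioi 0 with hW'def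
    have hW'o : IsOpen W' := hγcont.isOpen_inter_preimage hWo isOpen_Ioi
    have h0W' : (0 : EuclideanSpace ℂ (Fin (m + 3))) ∈ W' :=
      ⟨hW0, by simp [Set.mem_preimage, hγ0]⟩
    have hW'W : W' ⊆ W := Set.inter_subset_left
    have hγpos : ∀ z ∈ W', 0 < γ z := fun z hz => hz.2
    -- projections as ℝ-linear continuous maps
    set e : EuclideanSpace ℂ (Fin (m + 3)) ≃L[ℝ] (Fin (m + 3) → ℂ) :=
      PiLp.continuousLinearEquiv 2 ℝ (fun _ : Fin (m + 3) => ℂ) with hedef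
    set eL : EuclideanSpace ℂ (Fin (m + 3)) →L[ℝ] (Fin (m + 3) → ℂ) :=
      (e : EuclideanSpace ℂ (Fin (m + 3)) →L[ℝ] (Fin (m + 3) → ℂ)) with heLdef
    set pr : Fin (m + 3) → (EuclideanSpace ℂ (Fin (m + 3)) →L[ℝ] ℂ) :=
      fun i => (ContinuousLinearMap.proj i).comp eL with hprdef
    have hprapp : ∀ (i : Fin (m + 3)) z, pr i z = z i := fun i z => rfl
    have hprC : ∀ i : Fin (m + 3),
        ContDiff ℝ (ℓ : WithTop ℕ∞) (fun z : EuclideanSpace ℂ (Fin (m + 3)) => z i) :=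
      fun i => (pr i).contDiff
    -- contDiffAt pieces
    have hat : ∀ z ∈ W', ContDiffAt ℝ ℓ h z := fun z hz => hsm.contDiffAt (hWo.mem_nhds hz.1)
    have hγat : ∀ z ∈ W', ContDiffAt ℝ ℓ γ z := fun z hz => contDiffAt_const.add (hat z hz)
    have hsqat : ∀ z ∈ W', ContDiffAt ℝ ℓ (fun z => Real.sqrt (γ z)) z := fun z hz =>
      (hγat z hz).sqrt (ne_of_gt (hγpos z hz))
    have hscat : ∀ z ∈ W', ContDiffAt ℝ ℓ (fun z => ((Real.sqrt (γ z) : ℝ) : ℂ)) z := fun z hz =>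
      Complex.ofRealCLM.contDiff.contDiffAt.comp z (hsqat z hz)
    have hinvat : ∀ z ∈ W',
        ContDiffAt ℝ ℓ (fun z => (((Real.sqrt (γ z) : ℝ) : ℂ))⁻¹) z := fun z hz =>
      (hscat z hz).inv (by exact_mod_cast ne_of_gt (Real.sqrt_pos.2 (hγpos z hz)))
    have hqat : ∀ z ∈ W',
        ContDiffAt ℝ ℓ (fun z => (((γ z - 1) / Real.sqrt (γ z) : ℝ) : ℂ)) z := fun z hz =>
      Complex.ofRealCLM.contDiff.contDiffAt.comp z
        (((hγat z hz).sub contDiffAt_const).div (hsqat z hz)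
          (ne_of_gt (Real.sqrt_pos.2 (hγpos z hz))))
    have hcomp : ∀ z ∈ W', ∀ i, ContDiffAt ℝ ℓ (fun z => Ψ z i) z := by
      intro z hz i
      by_cases hi0 : i = 0
      · subst hi0
        simp only [hΨ0]
        exact (hscat z hz).mul (hprC 0).contDiffAt
      by_cases hi1 : i = 1
      · subst hi1
        simp only [hΨ1, div_eq_mul_inv]
        exact (hprC 1).contDiffAt.mul (hinvat z hz)
      by_cases hi2 : i = 2
      · subst hi2
        simp only [hΨ2, div_eq_mul_inv]
        exact ((hqat z hz).mul (hprC 0).contDiffAt).add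
          ((hprC 2).contDiffAt.mul (hinvat z hz))
      · simp only [show ∀ z, Ψ z i = z i from fun z => hΨi z i hi0 hi1 hi2]
        exact (hprC i).contDiffAt
    have hΨat : ∀ z ∈ W', ContDiffAt ℝ ℓ Ψ z := by
      intro z hz
      exact (e.symm.contDiff.contDiffAt).comp z (contDiffAt_pi.2 (hcomp z hz))
    have hΨCD : ContDiffOn ℝ ℓ Ψ W' := fun z hz => (hΨat z hz).contDiffWithinAt
    -- derivative at 0 is the identity
    have hd : ∀ (f : EuclideanSpace ℂ (Fin (m + 3)) → ℂ), ContDiffAt ℝ ℓ f 0 →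
        DifferentiableAt ℝ f 0 := fun f hf => hf.differentiableAt (by exact_mod_cast (show ℓ ≠ 0 by omega))
    have hs0 : Real.sqrt (γ 0) = 1 := by rw [hγ0, Real.sqrt_one]
    have hF : HasFDerivAt Ψ
        (ContinuousLinearMap.id ℝ (EuclideanSpace ℂ (Fin (m + 3)))) 0 := by
      have key : HasFDerivAt (fun z => (fun i => Ψ z i : Fin (m + 3) → ℂ)) eL 0 := by
        rw [hasFDerivAt_pi']
        intro i
        by_cases hi0 : i = 0
        · subst hi0
          simp only [hΨ0]
          have hc := (hd _ (hscat 0 h0W')).hasFDerivAt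
          have hz : HasFDerivAt (fun z : EuclideanSpace ℂ (Fin (m + 3)) => z 0) (pr 0) 0 :=
            (pr 0).hasFDerivAt
          have := hc.mul hz
          refine this.congr_fderiv ?_
          ext x
          simp [hs0, hprapp]; rfl
        by_cases hi1 : i = 1
        · subst hi1
          simp only [hΨ1, div_eq_mul_inv]
          have hc := (hd _ (hinvat 0 h0W')).hasFDerivAt
          have hz : HasFDerivAt (fun z : EuclideanSpace ℂ (Fin (m + 3)) => z 1) (pr 1) 0 :=
            (pr 1).hasFDerivAt
          have := hz.mul hc
          refine this.congr_fderiv ?_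
          ext x
          simp [hs0, hprapp]; rfl
        by_cases hi2 : i = 2
        · subst hi2
          simp only [hΨ2, div_eq_mul_inv]
          have hc1 := (hd _ (hqat 0 h0W')).hasFDerivAt
          have hz0 : HasFDerivAt (fun z : EuclideanSpace ℂ (Fin (m + 3)) => z 0) (pr 0) 0 :=
            (pr 0).hasFDerivAt
          have hc2 := (hd _ (hinvat 0 h0W')).hasFDerivAt
          have hz2 : HasFDerivAt (fun z : EuclideanSpace ℂ (Fin (m + 3)) => z 2) (pr 2) 0 :=
            (pr 2).hasFDerivAt
          have := (hc1.mul hz0).add (hz2.mul hc2)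
          refine this.congr_fderiv ?_
          ext x
          simp [hγ0, hs0, hprapp]; rfl
        · simp only [show ∀ z, Ψ z i = z i from fun z => hΨi z i hi0 hi1 hi2]
          exact (pr i).hasFDerivAt
      refine e.comp_hasFDerivAt_iff.mp ?_
      rw [ContinuousLinearMap.comp_id]
      exact key
    -- inverse function theorem
    have hΨ00 : Ψ 0 = 0 := by
      ext i
      by_cases hi0 : i = 0
      · subst hi0; rw [hΨ0]; simp
      by_cases hi1 : i = 1
      · subst hi1; rw [hΨ1]; simp
      by_cases hi2 : i = 2
      · subst hi2; rw [hΨ2]; simp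
      · rw [hΨi _ i hi0 hi1 hi2]
    have hf' : HasFDerivAt Ψ
        ((ContinuousLinearEquiv.refl ℝ (EuclideanSpace ℂ (Fin (m + 3)))) :
          EuclideanSpace ℂ (Fin (m + 3)) →L[ℝ] EuclideanSpace ℂ (Fin (m + 3))) 0 := by
      simpa using hF
    have hΨat0 : ContDiffAt ℝ ℓ Ψ 0 := hΨat 0 h0W'
    set P := hΨat0.toOpenPartialHomeomorph Ψ hf' hℓ' with hPdef
    have hP : ⇑P = Ψ := rfl
    have h0src : (0 : EuclideanSpace ℂ (Fin (m + 3))) ∈ P.source :=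
      hΨat0.mem_toOpenPartialHomeomorph_source hf' hℓ'
    have h0tgt : (0 : EuclideanSpace ℂ (Fin (m + 3))) ∈ P.target := by
      have := hΨat0.image_mem_toOpenPartialHomeomorph_target hf' hℓ'
      rwa [hΨ00] at this
    have hsymm0 : P.symm 0 = 0 := by
      have := P.left_inv h0src
      rwa [hP, hΨ00] at this
    have hginv : ContDiffAt ℝ ℓ (hΨat0.localInverse hf' hℓ') 0 := by
      have := hΨat0.to_localInverse hf' hℓ'
      rwa [hΨ00] at this
    obtain ⟨u, hu, hgu⟩ := hginv.contDiffOn le_rfl (by simp)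
    have hgP : hΨat0.localInverse hf' hℓ' = ⇑P.symm := rfl
    set V₂ : Set (EuclideanSpace ℂ (Fin (m + 3))) :=
      interior u ∩ (P.target ∩ ⇑P.symm ⁻¹' (W' ∩ P.source)) with hV₂def
    have hV₂o : IsOpen V₂ :=
      isOpen_interior.inter (P.symm.isOpen_inter_preimage (hW'o.inter P.open_source))
    have h0V₂ : (0 : EuclideanSpace ℂ (Fin (m + 3))) ∈ V₂ :=
      ⟨mem_interior_iff_mem_nhds.2 hu, h0tgt, by
        rw [Set.mem_preimage, hsymm0]; exact ⟨h0W', h0src⟩⟩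
    set V₁ : Set (EuclideanSpace ℂ (Fin (m + 3))) :=
      W' ∩ (P.source ∩ ⇑P ⁻¹' V₂) with hV₁def
    have hV₁o : IsOpen V₁ := hW'o.inter (P.isOpen_inter_preimage hV₂o)
    have h0V₁ : (0 : EuclideanSpace ℂ (Fin (m + 3))) ∈ V₁ :=
      ⟨h0W', h0src, by rw [Set.mem_preimage, hP, hΨ00]; exact h0V₂⟩
    refine ⟨W', hW'o, h0W', hW'W, hΨCD, hF,
      V₁, V₂, hΨat0.localInverse hf' hℓ', hV₁o, hV₂o, h0V₁, h0V₂,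
      Set.inter_subset_left, ⟨?_, ?_, ?_⟩, ?_, ?_⟩
    · -- MapsTo
      intro z hz
      have := hz.2.2
      rwa [Set.mem_preimage, hP] at this
    · -- InjOn
      have : Set.InjOn (⇑P) V₁ := P.injOn.mono (fun z hz => hz.2.1)
      rwa [hP] at this
    · -- SurjOn
      intro y hy
      have hy2 := hy.2.2
      rw [Set.mem_preimage] at hy2
      refine ⟨P.symm y, ⟨hy2.1, hy2.2, ?_⟩, ?_⟩
      · rw [Set.mem_preimage, P.right_inv hy.2.1]; exact hy
      · have := P.right_inv hy.2.1
        rwa [hP] at this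
    · -- left inverse on V₁
      intro z hz
      rw [hgP, show Ψ z = P z from rfl]
      exact P.left_inv hz.2.1
    · -- ContDiffOn of the inverse on V₂
      exact hgu.mono (Set.Subset.trans Set.inter_subset_left interior_subset)
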